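/- arXiv:2206.14035 — 2 statements merged into one kernel-verified Lean document; each statement's English description precedes it below -/
import Mathlib

section
/- Let p be an odd prime and n ≥ 2. Then for every natural number j ≥ 1, p^{j+1} − r(j+1) ≤ r'(j−1). (This is the key inequality of Lemma 7.2 showing that for n > 1 a differential d^r(w_{n+j+s}) = v^r z_{n+j+1} with s > 0 would be too short to exist on the relevant page of the Adams spectral sequence.) -/
/-- `q(k) = ∑_{m<k} p^{m(n+1)}`. -/
def qq (p n k : ℕ) : ℕ := ∑ m ∈ Finset.range k, p ^ (m * (n + 1))

/-- `r(j) = p^{i+1}(p^n-1) q(k) + k + p^i` where `j = i + k(n+1)`, `0 ≤ i ≤ n`. -/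
def rr (p n j : ℕ) : ℕ :=
  p ^ (j % (n + 1) + 1) * (p ^ n - 1) * qq p n (j / (n + 1)) + j / (n + 1) + p ^ (j % (n + 1))

/-- `r'(j) = p^{j+1} - r(j)`. -/
def rr' (p n j : ℕ) : ℕ := p ^ (j + 1) - rr p n j

/-- `W(j) = |w_{n+j}|`: `W(j) = 2p^{n+j}+1` for `0 ≤ j ≤ n`, and
`W(j+n+1) = 2p^j(p-1) + W(j) + 2(p^n-1)(p^{n+j+1}+1)`. -/
def WW (p n : ℕ) (j : ℕ) : ℕ :=
  if h : j < n + 1 then 2 * p ^ (n + j) + 1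
  else 2 * p ^ (j - (n + 1)) * (p - 1) + WW p n (j - (n + 1))
       + 2 * (p ^ n - 1) * (p ^ ((j - (n + 1)) + n + 1) + 1)
termination_by j
decreasing_by omega

lemma qq_succ (p n k : ℕ) : qq p n (k+1) = qq p n k + p ^ (k*(n+1)) :=
  Finset.sum_range_succ _ _

lemma qq_geom (p n k : ℕ) :
    p ^ (n+1) * qq p n k + 1 = p ^ (k*(n+1)) + qq p n k := by
  induction k with
  | zero => simp [qq]
  | succ k ih =>
    have h1 : p ^ ((k+1)*(n+1)) = p ^ (n+1) * p ^ (k*(n+1)) := by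
      rw [← pow_add]; ring_nf
    rw [qq_succ, mul_add, h1]
    nlinarith [ih]

lemma zA (p T Q E P : ℤ) (hp : 3 ≤ p) (hQ : 0 ≤ Q) (hP : 0 ≤ P) (hT : p*p ≤ T+1)
    (hgeom : p*(T+1)*Q + 1 = E + Q) :
    P*(p*p)*E + (P*p*T*Q + P) ≤ P*p*E + (P*(p*(p*p))*T*Q + P*(p*p)) := by
  have hE : E = p*(T+1)*Q + 1 - Q := by linarith
  subst hE
  have h1 : 0 ≤ P*(p*(p-1)*Q*((T+1)-p)) := by
    apply mul_nonneg hP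
    apply mul_nonneg (mul_nonneg (mul_nonneg (by linarith) (by linarith)) hQ)
    nlinarith
  have h2 : 0 ≤ P*(p-1) := mul_nonneg hP (by linarith)
  nlinarith [h1, h2]

lemma zB (p T Q E M : ℤ) (hp : 3 ≤ p) (hQ : 0 ≤ Q) (hM1 : 1 ≤ M) (hM : M*p = T+1)
    (hgeom : p*(T+1)*Q + 1 = E + Q) :
    p*(T+1)*E + ((T+1)*T*Q + M) ≤ (T+1)*E + (p*T*(Q+E) + 2) := by
  have hE : E = p*(T+1)*Q + 1 - Q := by linarith
  subst hE
  have hT2 : T = M*p - 1 := by linarith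
  subst hT2
  have h1 : 0 ≤ (p*(M-1)*(p-1))*(M*p*Q) := by
    apply mul_nonneg
    · apply mul_nonneg (mul_nonneg (by linarith) (by linarith)) (by linarith)
    · apply mul_nonneg (mul_nonneg (by linarith) (by linarith)) hQ
  have h2 : 0 ≤ (p-1)*(M-1) := mul_nonneg (by linarith) (by linarith)
  nlinarith [h1, h2]

lemma zC (p T Q E : ℤ) (hp : 3 ≤ p) (hQ : 0 ≤ Q) (hT : p*p ≤ T+1)
    (hgeom : p*(T+1)*Q + 1 = E + Q) :
    p*(p*(T+1))*E + (p*(T+1)*T*Q + (T+1)) ≤ p*(T+1)*E + (p*p*T*(Q+E) + 1 + p) := by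
  have hE : E = p*(T+1)*Q + 1 - Q := by linarith
  subst hE
  have h1 : 0 ≤ (p*(p-1)*((T+1)-p))*((T+1)*Q) := by
    apply mul_nonneg
    · apply mul_nonneg (mul_nonneg (by linarith) (by linarith)) (by nlinarith)
    · apply mul_nonneg (by nlinarith) hQ
  have h2 : (p-1)*(p*p) ≤ (p-1)*(T+1) := by
    apply mul_le_mul_of_nonneg_left hT (by linarith)
  have h3 : 3*(p*p) ≤ p*(p*p) := by nlinarith
  nlinarith [h1, h2, h3]

lemma key_step (p n : ℕ) (hp3 : 3 ≤ p) (hn : 2 ≤ n) (m : ℕ) :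
    p ^ (m+2) + rr p n m ≤ p ^ (m+1) + rr p n (m+2) := by
  obtain ⟨T, hT⟩ : ∃ T, p ^ n = T + 1 :=
    ⟨p ^ n - 1, by have := Nat.one_le_pow n p (by omega); omega⟩
  set i := m % (n+1) with hi
  set k := m / (n+1) with hk
  have hin : i < n + 1 := Nat.mod_lt m (by omega)
  have hm : m = i + k * (n+1) := by
    rw [hi, hk]; exact (Nat.mod_add_div' m (n+1)).symm
  -- common facts
  have hQ : (0:ℤ) ≤ (qq p n k : ℤ) := Int.natCast_nonneg _
  have hp3' : (3:ℤ) ≤ (p:ℤ) := by exact_mod_cast hp3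
  have hTz : ((p:ℤ))^n = (T:ℤ) + 1 := by exact_mod_cast hT
  have hTT : (p:ℤ)*(p:ℤ) ≤ (T:ℤ) + 1 := by
    have h2 : (p:ℤ)^2 ≤ (p:ℤ)^n := pow_le_pow_right₀ (by linarith) hn
    nlinarith [h2]
  have geo : ((p:ℤ))^(n+1) * (qq p n k : ℤ) + 1 = (p:ℤ)^(k*(n+1)) + (qq p n k : ℤ) := by
    exact_mod_cast qq_geom p n k
  have hgz : (p:ℤ)*((T:ℤ)+1)*(qq p n k : ℤ) + 1 = (p:ℤ)^(k*(n+1)) + (qq p n k : ℤ) := by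
    rw [← hTz, ← geo]; ring
  have hrm : rr p n m = p^(i+1) * (p^n - 1) * qq p n k + k + p^i := rfl
  rcases lt_trichotomy (i+2) (n+1) with hc | hc | hc
  · -- Case A
    have e1 : (m+2) % (n+1) = i+2 := by
      rw [show m+2 = (i+2) + k*(n+1) from by omega, Nat.add_mul_mod_self_right,
        Nat.mod_eq_of_lt hc]
    have e2 : (m+2) / (n+1) = k := by
      rw [show m+2 = (i+2) + k*(n+1) from by omega,
        Nat.add_mul_div_right _ _ (by omega : 0 < n+1), Nat.div_eq_of_lt hc, Nat.zero_add]
    have hr2 : rr p n (m+2) = p^(i+2+1) * (p^n - 1) * qq p n k + k + p^(i+2) := by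
      rw [rr, e1, e2]
    rw [hrm, hr2, hT, Nat.add_sub_cancel]
    rw [show p^(m+2) = p^i*(p*p) * p^(k*(n+1)) from by
        rw [show m+2 = (i+2)+k*(n+1) from by omega]; ring,
      show p^(m+1) = p^i*p * p^(k*(n+1)) from by
        rw [show m+1 = (i+1)+k*(n+1) from by omega]; ring,
      show p^(i+1) = p^i*p from by ring,
      show p^(i+2+1) = p^i*(p*(p*p)) from by ring,
      show p^(i+2) = p^i*(p*p) from by ring]
    zify
    have hPz : (0:ℤ) ≤ (p:ℤ)^i := by positivity
    linarith [zA (p:ℤ) (T:ℤ) (qq p n k : ℤ) ((p:ℤ)^(k*(n+1))) ((p:ℤ)^i)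
      hp3' hQ hPz hTT hgz]
  · -- Case B : i = n-1
    have hi' : i + 1 = n := by omega
    have e1 : (m+2) % (n+1) = 0 := by
      rw [show m+2 = (k+1)*(n+1) from by have h2 : (k+1)*(n+1) = k*(n+1)+(n+1) := Nat.succ_mul k (n+1); omega]; exact Nat.mul_mod_left _ _
    have e2 : (m+2) / (n+1) = k+1 := by
      rw [show m+2 = (k+1)*(n+1) from by have h2 : (k+1)*(n+1) = k*(n+1)+(n+1) := Nat.succ_mul k (n+1); omega]; exact Nat.mul_div_cancel _ (by omega)
    have hr2 : rr p n (m+2) = p^(0+1) * (p^n - 1) * qq p n (k+1) + (k+1) + p^0 := by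
      rw [rr, e1, e2]
    rw [hrm, hr2, hT, Nat.add_sub_cancel, qq_succ, pow_zero, zero_add, pow_one]
    rw [show p^(m+2) = p*(p^n) * p^(k*(n+1)) from by
        rw [show m+2 = (n+1)+k*(n+1) from by omega]; ring,
      show p^(m+1) = p^n * p^(k*(n+1)) from by
        rw [show m+1 = n+k*(n+1) from by omega]; ring,
      show p^(i+1) = p^n from by rw [hi'],
      hT]
    have hMp : p^i * p = T + 1 := by rw [← pow_succ, hi', hT]
    have hM1 : 1 ≤ p^i := Nat.one_le_pow _ _ (by omega)
    zify at hMp hM1 ⊢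
    linarith [zB (p:ℤ) (T:ℤ) (qq p n k : ℤ) ((p:ℤ)^(k*(n+1))) ((p:ℤ)^i)
      hp3' hQ hM1 hMp hgz]
  · -- Case C : i = n
    have hi' : i = n := by omega
    have e1 : (m+2) % (n+1) = 1 := by
      rw [show m+2 = 1 + (k+1)*(n+1) from by have h2 : (k+1)*(n+1) = k*(n+1)+(n+1) := Nat.succ_mul k (n+1); omega, Nat.add_mul_mod_self_right,
        Nat.mod_eq_of_lt (by omega)]
    have e2 : (m+2) / (n+1) = k+1 := by
      rw [show m+2 = 1 + (k+1)*(n+1) from by have h2 : (k+1)*(n+1) = k*(n+1)+(n+1) := Nat.succ_mul k (n+1); omega,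
        Nat.add_mul_div_right _ _ (by omega : 0 < n+1), Nat.div_eq_of_lt (by omega),
        Nat.zero_add]
    have hr2 : rr p n (m+2) = p^(1+1) * (p^n - 1) * qq p n (k+1) + (k+1) + p^1 := by
      rw [rr, e1, e2]
    rw [hrm, hr2, hT, Nat.add_sub_cancel, qq_succ, pow_one]
    rw [show p^(m+2) = p*(p*(p^n)) * p^(k*(n+1)) from by
        rw [show m+2 = (n+2)+k*(n+1) from by omega]; ring,
      show p^(m+1) = p*(p^n) * p^(k*(n+1)) from by
        rw [show m+1 = (n+1)+k*(n+1) from by omega]; ring,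
      show p^(i+1) = p*(p^n) from by rw [hi']; ring,
      show p^(1+1) = p*p from by ring,
      show p^i = p^n from by rw [hi'],
      hT]
    zify
    linarith [zC (p:ℤ) (T:ℤ) (qq p n k : ℤ) ((p:ℤ)^(k*(n+1))) hp3' hQ hTT hgz]

/-- For an odd prime `p` and `n >= 2`: `p^{j+1} - r(j+1) <= r'(j-1)` for all `j >= 1`. -/
theorem too_short (p n : ℕ) (hp : p.Prime) (hodd : Odd p) (hn : 2 ≤ n) (j : ℕ) (hj : 1 ≤ j) :
    p ^ (j + 1) - rr p n (j + 1) ≤ rr' p n (j - 1) := by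
  have hp3 : 3 ≤ p := by
    have h2 := hp.two_le
    have h3 := Nat.odd_iff.mp hodd
    omega
  obtain ⟨m, rfl⟩ : ∃ m, j = m + 1 := ⟨j - 1, by omega⟩
  have key := key_step p n hp3 hn m
  simp only [rr', Nat.add_sub_cancel]
  have main : ∀ a b c d : ℕ, a + d ≤ c + b → a - b ≤ c - d := fun a b c d h => by omega
  exact main _ _ _ _ key
end

section
/- Let n = 1. Then for every natural number j, W(j+2) = 2p^{j+1} + 1 + 2(p − 1)·(p^{j+1} + r(j+2)). (This identity shows that for n = 1 a hypothetical Adams differential d^r(y_{j+1}) = v^r w_{n+j+2} would have length r = p^{j+1} + r(j+2), which exceeds p^{j+1} and hence cannot occur.) -/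
lemma rr_step (p j : ℕ) : rr p 1 (j + 2) = rr p 1 j + (p - 1) * p ^ (j + 1) + 1 := by
  unfold rr qq
  have h1 : (j + 2) % (1 + 1) = j % (1 + 1) := by omega
  have h2 : (j + 2) / (1 + 1) = j / (1 + 1) + 1 := by omega
  rw [h1, h2, Finset.sum_range_succ]
  have h3 : p ^ (j % (1+1) + 1) * (p ^ 1 - 1) * p ^ (j / (1+1) * (1 + 1)) =
      (p - 1) * p ^ (j + 1) := by
    rw [pow_one, mul_comm (p ^ (j % (1+1) + 1)) (p - 1), mul_assoc, ← pow_add]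
    congr 2
    omega
  rw [mul_add, h3]
  ring

/-- For `n = 1`: `W(j+2) = 2p^{j+1} + 1 + 2(p-1)(p^{j+1} + r(j+2))`, so a hypothetical
differential `d^r(y_{j+1}) = v^r w_{n+j+2}` would have `r = p^{j+1} + r(j+2) > p^{j+1}`. -/
theorem n_one_case (p : ℕ) (hp : p.Prime) (j : ℕ) :
    WW p 1 (j + 2) = 2 * p ^ (j + 1) + 1 + 2 * (p - 1) * (p ^ (j + 1) + rr p 1 (j + 2)) := by
  obtain ⟨a, rfl⟩ : ∃ a, p = a + 2 := ⟨p - 2, by have := hp.two_le; omega⟩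
  induction j using Nat.twoStepInduction with
  | zero =>
    rw [WW, rr_step]
    simp [WW, rr, qq]
    ring
  | one =>
    rw [WW, rr_step]
    simp [WW, rr, qq]
    ring
  | more n ih _ =>
    rw [show n + 2 + 2 = (n + 2) + (1 + 1) by ring, WW]
    simp only [show ¬ (n + 2 + (1 + 1) < 1 + 1) by omega, dite_false,
      show n + 2 + (1 + 1) - (1 + 1) = n + 2 by omega]
    rw [ih, show n + 2 + (1 + 1) = (n + 2) + 2 by ring, rr_step (a + 2) (n + 2)]
    simp only [show a + 2 - 1 = a + 1 from rfl, pow_one]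
    ring
end
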